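/- Let P be a simple d-polytope in E^d with m facets and let ε_2 ≥ 0 satisfy ε_2 ≤ ((1 − γ)/(4(1 + d)))^{m−d}, ε_2 ≤ (1 − γ)/(2(1 + d)·√d·α), and ε_2 ≤ 5(1 − γ)^{m−d} / (18·C(d, ⌊d/2⌋)·2^{m−d}·(3^{m−d} − 2^{m−d})), where C(a,b) is the binomial coefficient. Then for every vertex v of P, {x ∈ Π_{v,ε_2} : σ_i(q(x)) ≥ 0 for all m−d+2 ≤ i ≤ m} ⊆ C_v ∪ P. -/

import Mathlib

noncomputable section

open Metric Set Finset Matrix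
open scoped RealInnerProductSpace BigOperators Classical

namespace AverkovHenk

abbrev E (d : ℕ) := EuclideanSpace ℝ (Fin d)

/-- Support function `h(P,u)` of `P` in direction `u`. -/
def supp {d : ℕ} (P : Set (E d)) (u : E d) : ℝ :=
  sSup ((fun x => ⟪u, x⟫) '' P)

/-- The normalized affine function `q_F` of the facet with outward unit normal `u`. -/
def qf {d : ℕ} (P : Set (E d)) (u : E d) (x : E d) : ℝ :=
  (supp P u - ⟪u, x⟫) / Metric.diam P

/-- The exposed face of `P` in direction `u`. -/
def faceOf {d : ℕ} (P : Set (E d)) (u : E d) : Set (E d) :=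
  {x ∈ P | ⟪u, x⟫ = supp P u}

/-- `u` is an outward unit normal of a facet (a `(d-1)`-dimensional face) of `P`. -/
def IsFacetNormal {d : ℕ} (P : Set (E d)) (u : E d) : Prop :=
  ‖u‖ = 1 ∧ Module.finrank ℝ ↥(vectorSpan ℝ (faceOf P u)) = d - 1

/-- The vertices of `P`, i.e. its extreme points. -/
def vertices {d : ℕ} (P : Set (E d)) : Set (E d) := Set.extremePoints ℝ P

/-- The `l`-th elementary symmetric function of `y_1, …, y_m`. -/
def esymm {m : ℕ} (y : Fin m → ℝ) (l : ℕ) : ℝ :=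
  ∑ J ∈ Finset.powersetCard l (Finset.univ : Finset (Fin m)), ∏ j ∈ J, y j

/-- A presentation of a convex `d`-polytope `P ⊆ E^d` by the `m` outward unit normals
`u 0, …, u (m-1)` of its facets, together with the induced representation
`P = {x | q_j(x) ≥ 0 for all j}`. -/
structure FacetRep (d m : ℕ) where
  P : Set (E d)
  u : Fin m → E d
  convex : Convex ℝ P
  compact : IsCompact P
  fulldim : (interior P).Nonempty
  inj : Function.Injective u
  facet : ∀ j, IsFacetNormal P (u j)
  complete : ∀ w : E d, IsFacetNormal P w → ∃ j, w = u j
  rep : P = {x | ∀ j, 0 ≤ qf P (u j) x}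

namespace FacetRep

variable {d m : ℕ}

/-- The vector `q(x) = (q_1(x), …, q_m(x))`. -/
def q (R : FacetRep d m) (x : E d) : Fin m → ℝ := fun j => qf R.P (R.u j) x

/-- The indices of the facets containing the point `v`. -/
def act (R : FacetRep d m) (v : E d) : Finset (Fin m) :=
  Finset.univ.filter fun j => R.q v j = 0

/-- The polytope is simple: each vertex lies on exactly `d` facets. -/
def Simple (R : FacetRep d m) : Prop :=
  ∀ v ∈ vertices R.P, (R.act v).card = d

/-- The enlarged polytope `P_ε`. -/
def Peps (R : FacetRep d m) (ε : ℝ) : Set (E d) := {x | ∀ j, -ε ≤ R.q x j}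

/-- The box `Π_{v,ε} = {x : |q_v(x)|_∞ ≤ ε}`. -/
def Piv (R : FacetRep d m) (v : E d) (ε : ℝ) : Set (E d) :=
  {x | ∀ j ∈ R.act v, |R.q x j| ≤ ε}

/-- The cone `C_v = {x : -σ_1(q_v(x)) ≥ (2/3)|q_v(x)|}` (Euclidean norm). -/
def Cv (R : FacetRep d m) (v : E d) : Set (E d) :=
  {x | (2/3) * Real.sqrt (∑ j ∈ R.act v, (R.q x j)^2) ≤ -(∑ j ∈ R.act v, R.q x j)}

/-- The polytope `P^v_{ε,δ}`. -/
def Pv (R : FacetRep d m) (v : E d) (ε δ : ℝ) : Set (E d) :=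
  {x | (∀ j ∈ R.act v, -ε ≤ R.q x j) ∧ ∀ j ∉ R.act v, δ ≤ R.q x j}

/-- `γ = max{1 - q_F(v) : F a facet, v a vertex not on F}`. -/
def gam (R : FacetRep d m) : ℝ :=
  sSup {c | ∃ v ∈ vertices R.P, ∃ j, R.q v j ≠ 0 ∧ c = 1 - R.q v j}

/-- The polynomial `f_k` built from weights `y_v` over the vertex set `V`. -/
def fk (R : FacetRep d m) (V : Finset (E d)) (y : ↥V → ℝ) (k : ℕ) (x : E d) : ℝ :=
  ∑ v : ↥V, y v * ((∑ j ∈ R.act v.1, (1 - R.q x j)^(2*k)) / (R.act v.1).card)^(2*k)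

/-- The matrix `A_k` indexed by the vertex set `V`. -/
def Ak (R : FacetRep d m) (V : Finset (E d)) (k : ℕ) : Matrix ↥V ↥V ℝ :=
  Matrix.of fun w v : ↥V => ((∑ j ∈ R.act v.1, (1 - R.q w.1 j)^(2*k)) / (R.act v.1).card)^(2*k)

/-- `deg(P)`: the maximal number of facets through a vertex. -/
def degP (R : FacetRep d m) (V : Finset (E d)) : ℕ := V.sup fun v => (R.act v).card

end FacetRep

/-- `|U_s^{-1}|_2` where `U_s` is the matrix with rows `u_j^T`, `j ∈ s`: the supremum of `‖x‖`
over the set where the Euclidean norm of `U_s x` is at most `1`. -/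
def invNormU {d m : ℕ} (u : Fin m → E d) (s : Finset (Fin m)) : ℝ :=
  sSup {c | ∃ x : E d, Real.sqrt (∑ j ∈ s, (⟪u j, x⟫)^2) ≤ 1 ∧ c = ‖x‖}

/-- `α = max_{v ∈ vert(P)} |U_v^{-1}|_2`. -/
def alpha {d m : ℕ} (R : FacetRep d m) (V : Finset (E d)) : ℝ :=
  sSup {a | ∃ v ∈ V, a = invNormU R.u (R.act v)}

/-- The normal cone `N(Q,x) = {u : ⟨x,u⟩ = h(Q,u)}`. -/
def normalCone {d : ℕ} (Q : Set (E d)) (x : E d) : Set (E d) :=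
  {u | ⟪u, x⟫ = supp Q u}

/-- `S` is an edge (a 1-dimensional face) of `P`. -/
def IsEdgeOf {d : ℕ} (P S : Set (E d)) : Prop :=
  IsExposed ℝ P S ∧ Module.finrank ℝ ↥(vectorSpan ℝ S) = 1

/-- elementary symmetric polynomial over a finset of indices -/
def esymmOn (s : Finset (Fin m)) (y : Fin m → ℝ) (k : ℕ) : ℝ :=
  ∑ J ∈ Finset.powersetCard k s, ∏ j ∈ J, y j

lemma esymmOn_zero (s : Finset (Fin m)) (y : Fin m → ℝ) : esymmOn s y 0 = 1 := by
  simp [esymmOn, Finset.powersetCard_zero]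

lemma esymmOn_of_card_lt {s : Finset (Fin m)} {y : Fin m → ℝ} {k : ℕ} (h : s.card < k) :
    esymmOn s y k = 0 := by
  simp [esymmOn, Finset.powersetCard_eq_empty.2 h]

lemma esymmOn_one (s : Finset (Fin m)) (y : Fin m → ℝ) : esymmOn s y 1 = ∑ j ∈ s, y j := by
  rw [esymmOn, Finset.powersetCard_one, Finset.sum_map]
  simp

lemma esymmOn_self (s : Finset (Fin m)) (y : Fin m → ℝ) :
    esymmOn s y s.card = ∏ j ∈ s, y j := by
  simp [esymmOn, Finset.powersetCard_self]

lemma esymmOn_insert {s : Finset (Fin m)} {a : Fin m} (ha : a ∉ s) (y : Fin m → ℝ) (k : ℕ) :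
    esymmOn (insert a s) y (k + 1) = esymmOn s y (k + 1) + y a * esymmOn s y k := by
  rw [esymmOn, Finset.powersetCard_succ_insert ha]
  rw [Finset.sum_union]
  · congr 1
    rw [Finset.sum_image]
    · rw [esymmOn, Finset.mul_sum]
      refine Finset.sum_congr rfl fun J hJ => ?_
      have haJ : a ∉ J := fun h => ha ((Finset.mem_powersetCard.1 hJ).1 h)
      rw [Finset.prod_insert haJ]
    · intro J hJ K hK hJK
      have haJ : a ∉ J := fun h => ha ((Finset.mem_powersetCard.1 hJ).1 h)
      have haK : a ∉ K := fun h => ha ((Finset.mem_powersetCard.1 hK).1 h)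
      have := congrArg (Finset.erase · a) hJK
      simpa [Finset.erase_insert, haJ, haK] using this
  · rw [Finset.disjoint_left]
    intro J hJ hJ'
    obtain ⟨K, hK, rfl⟩ := Finset.mem_image.1 hJ'
    exact ha ((Finset.mem_powersetCard.1 hJ).1 (Finset.mem_insert_self a K))

lemma esymmOn_union {s t : Finset (Fin m)} (hst : Disjoint s t) (y : Fin m → ℝ) (n : ℕ) :
    esymmOn (s ∪ t) y n = ∑ k ∈ Finset.range (n + 1), esymmOn s y k * esymmOn t y (n - k) := by
  induction s using Finset.induction generalizing n with
  | empty =>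
      rw [Finset.empty_union]
      rw [Finset.sum_eq_single 0]
      · simp [esymmOn_zero]
      · intro k hk hk0
        rw [esymmOn_of_card_lt (by simpa [Nat.pos_of_ne_zero hk0] using Nat.pos_of_ne_zero hk0), zero_mul]
      · intro h; exact absurd (Finset.mem_range.2 (Nat.succ_pos n)) h
  | @insert a s ha ih =>
      have hat : a ∉ t := fun h => (Finset.disjoint_left.1 hst (Finset.mem_insert_self a s)) h
      have hst' : Disjoint s t := Finset.disjoint_of_subset_left (Finset.subset_insert a s) hst
      have hau : a ∉ s ∪ t := by simp [ha, hat]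
      rw [Finset.insert_union]
      cases n with
      | zero => simp [esymmOn_zero]
      | succ n =>
          rw [esymmOn_insert hau, ih hst', ih hst', Finset.mul_sum]
          have hr : ∀ k ∈ Finset.range (n + 2),
              esymmOn (insert a s) y k * esymmOn t y (n + 1 - k)
                = esymmOn s y k * esymmOn t y (n + 1 - k)
                  + (if k = 0 then 0 else y a * (esymmOn s y (k-1) * esymmOn t y (n + 1 - k))) := by
            intro k _
            cases k with
            | zero => simp [esymmOn_zero]
            | succ k =>
                rw [esymmOn_insert ha]
                simp [add_mul, mul_assoc]
          have key : ∑ k ∈ Finset.range (n + 2),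
              esymmOn (insert a s) y k * esymmOn t y (n + 1 - k)
              = (∑ k ∈ Finset.range (n + 2), esymmOn s y k * esymmOn t y (n + 1 - k))
                + ∑ k ∈ Finset.range (n + 1), y a * (esymmOn s y k * esymmOn t y (n - k)) := by
            rw [Finset.sum_congr rfl hr, Finset.sum_add_distrib]
            congr 1
            rw [Finset.sum_range_succ'
              (f := fun k => if k = 0 then (0:ℝ) else y a * (esymmOn s y (k-1) * esymmOn t y (n + 1 - k)))]
            simp
          rw [key]


lemma prod_abs_le_pow {J : Finset (Fin m)} {f : Fin m → ℝ} {M : ℝ}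
    (h0 : ∀ j ∈ J, 0 ≤ f j) (h : ∀ j ∈ J, f j ≤ M) : ∏ j ∈ J, f j ≤ M ^ J.card := by
  calc ∏ j ∈ J, f j ≤ ∏ _j ∈ J, M := Finset.prod_le_prod h0 h
    _ = M ^ J.card := by rw [Finset.prod_const]

lemma esymmOn_nonneg {s : Finset (Fin m)} {y : Fin m → ℝ} (h : ∀ j ∈ s, 0 ≤ y j) (k : ℕ) :
    0 ≤ esymmOn s y k := by
  refine Finset.sum_nonneg fun J hJ => Finset.prod_nonneg fun j hj => ?_
  exact h j ((Finset.mem_powersetCard.1 hJ).1 hj)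

lemma esymmOn_le {s : Finset (Fin m)} {y : Fin m → ℝ} {M : ℝ} (hM : 0 ≤ M)
    (h0 : ∀ j ∈ s, 0 ≤ y j) (h : ∀ j ∈ s, y j ≤ M) (k : ℕ) :
    esymmOn s y k ≤ (s.card.choose k : ℝ) * M ^ k := by
  have : ∀ J ∈ Finset.powersetCard k s, ∏ j ∈ J, y j ≤ M ^ k := by
    intro J hJ
    obtain ⟨hJs, hJc⟩ := Finset.mem_powersetCard.1 hJ
    calc ∏ j ∈ J, y j ≤ M ^ J.card :=
          prod_abs_le_pow (fun j hj => h0 j (hJs hj)) (fun j hj => h j (hJs hj))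
      _ = M ^ k := by rw [hJc]
  calc esymmOn s y k ≤ ∑ _J ∈ Finset.powersetCard k s, M ^ k := Finset.sum_le_sum this
    _ = (s.card.choose k : ℝ) * M ^ k := by
        rw [Finset.sum_const, Finset.card_powersetCard, nsmul_eq_mul]

lemma esymmOn_abs_le {s : Finset (Fin m)} {y : Fin m → ℝ} {M : ℝ} (hM : 0 ≤ M)
    (h : ∀ j ∈ s, |y j| ≤ M) (k : ℕ) :
    |esymmOn s y k| ≤ (s.card.choose k : ℝ) * M ^ k := by
  calc |esymmOn s y k| ≤ ∑ J ∈ Finset.powersetCard k s, |∏ j ∈ J, y j| :=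
        Finset.abs_sum_le_sum_abs _ _
    _ = ∑ J ∈ Finset.powersetCard k s, ∏ j ∈ J, |y j| := by
        refine Finset.sum_congr rfl fun J _ => ?_
        exact Finset.abs_prod J y
    _ ≤ ∑ _J ∈ Finset.powersetCard k s, M ^ k := by
        refine Finset.sum_le_sum fun J hJ => ?_
        obtain ⟨hJs, hJc⟩ := Finset.mem_powersetCard.1 hJ
        calc ∏ j ∈ J, |y j| ≤ M ^ J.card :=
              prod_abs_le_pow (fun j _ => abs_nonneg _) (fun j hj => h j (hJs hj))
          _ = M ^ k := by rw [hJc]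
    _ = (s.card.choose k : ℝ) * M ^ k := by
        rw [Finset.sum_const, Finset.card_powersetCard, nsmul_eq_mul]

lemma esymmOn_abs_le_pair {s : Finset (Fin m)} {y : Fin m → ℝ} {M : ℝ} (hM : 0 ≤ M)
    (h : ∀ j ∈ s, |y j| ≤ M) {k : ℕ} (hk : 2 ≤ k) :
    |esymmOn s y k| ≤ (s.card.choose k : ℝ) * M ^ (k - 2) * ((∑ j ∈ s, (y j)^2) / 2) := by
  have key : ∀ J ∈ Finset.powersetCard k s,
      ∏ j ∈ J, |y j| ≤ M ^ (k - 2) * ((∑ j ∈ s, (y j)^2) / 2) := by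
    intro J hJ
    obtain ⟨hJs, hJc⟩ := Finset.mem_powersetCard.1 hJ
    have hJne : J.Nonempty := Finset.card_pos.1 (by omega)
    obtain ⟨j1, hj1⟩ := hJne
    have hJ2 : (J.erase j1).Nonempty := by
      apply Finset.card_pos.1
      rw [Finset.card_erase_of_mem hj1]; omega
    obtain ⟨j2, hj2⟩ := hJ2
    have hprod : ∏ j ∈ J, |y j| = |y j1| * (|y j2| * ∏ j ∈ (J.erase j1).erase j2, |y j|) := by
      rw [← Finset.mul_prod_erase _ _ hj1, ← Finset.mul_prod_erase _ _ hj2]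
    have hcard2 : ((J.erase j1).erase j2).card = k - 2 := by
      rw [Finset.card_erase_of_mem hj2, Finset.card_erase_of_mem hj1, hJc]; omega
    have hrest : ∏ j ∈ (J.erase j1).erase j2, |y j| ≤ M ^ (k - 2) := by
      rw [← hcard2]
      exact prod_abs_le_pow (fun j _ => abs_nonneg _)
        (fun j hj => h j (hJs (Finset.mem_of_mem_erase (Finset.mem_of_mem_erase hj))))
    have hne : j1 ≠ j2 := fun hne => (Finset.ne_of_mem_erase hj2) hne.symm
    have hj2J : j2 ∈ J := Finset.mem_of_mem_erase hj2
    have hpair : |y j1| * |y j2| ≤ (∑ j ∈ s, (y j)^2) / 2 := by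
      have h1 : |y j1| * |y j2| ≤ ((y j1)^2 + (y j2)^2)/2 := by
        nlinarith [sq_nonneg (|y j1| - |y j2|), sq_abs (y j1), sq_abs (y j2)]
      have h2 : (y j1)^2 + (y j2)^2 ≤ ∑ j ∈ s, (y j)^2 := by
        have : ∑ j ∈ ({j1, j2} : Finset (Fin m)), (y j)^2 ≤ ∑ j ∈ s, (y j)^2 := by
          refine Finset.sum_le_sum_of_subset_of_nonneg ?_ (fun j _ _ => sq_nonneg _)
          intro j hj
          rcases Finset.mem_insert.1 hj with rfl | hj
          · exact hJs hj1
          · exact hJs (Finset.mem_singleton.1 hj ▸ hj2J)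
        rwa [Finset.sum_insert (by simpa using hne), Finset.sum_singleton] at this
      linarith
    have hMk : (0:ℝ) ≤ M ^ (k-2) := pow_nonneg hM _
    have habs1 : 0 ≤ |y j1| := abs_nonneg _
    have habs2 : 0 ≤ |y j2| := abs_nonneg _
    have hrest0 : 0 ≤ ∏ j ∈ (J.erase j1).erase j2, |y j| :=
      Finset.prod_nonneg fun j _ => abs_nonneg _
    calc ∏ j ∈ J, |y j| = (|y j1| * |y j2|) * ∏ j ∈ (J.erase j1).erase j2, |y j| := by
          rw [hprod]; ring
      _ ≤ ((∑ j ∈ s, (y j)^2) / 2) * M ^ (k-2) := by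
          apply mul_le_mul hpair hrest hrest0
          have : (0:ℝ) ≤ (y j1)^2 + (y j2)^2 := by positivity
          nlinarith [sq_nonneg (y j1), sq_nonneg (y j2), hpair, mul_nonneg habs1 habs2]
      _ = M ^ (k - 2) * ((∑ j ∈ s, (y j)^2) / 2) := by ring
  calc |esymmOn s y k| ≤ ∑ J ∈ Finset.powersetCard k s, |∏ j ∈ J, y j| :=
        Finset.abs_sum_le_sum_abs _ _
    _ = ∑ J ∈ Finset.powersetCard k s, ∏ j ∈ J, |y j| :=
        Finset.sum_congr rfl fun J _ => Finset.abs_prod J y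
    _ ≤ ∑ _J ∈ Finset.powersetCard k s, M ^ (k-2) * ((∑ j ∈ s, (y j)^2) / 2) :=
        Finset.sum_le_sum key
    _ = (s.card.choose k : ℝ) * (M ^ (k-2) * ((∑ j ∈ s, (y j)^2) / 2)) := by
        rw [Finset.sum_const, Finset.card_powersetCard, nsmul_eq_mul]
    _ = (s.card.choose k : ℝ) * M ^ (k - 2) * ((∑ j ∈ s, (y j)^2) / 2) := by ring

lemma esymmOn_ratio {s : Finset (Fin m)} {y : Fin m → ℝ} {β : ℝ} (hβ : 0 < β)
    (h : ∀ j ∈ s, β ≤ y j) {k : ℕ} (hk : k ≤ s.card) :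
    esymmOn s y (s.card - k) * β ^ k ≤ (s.card.choose k : ℝ) * ∏ j ∈ s, y j := by
  have hypos : ∀ j ∈ s, 0 < y j := fun j hj => lt_of_lt_of_le hβ (h j hj)
  have key : ∀ J ∈ Finset.powersetCard (s.card - k) s,
      (∏ j ∈ J, y j) * β ^ k ≤ ∏ j ∈ s, y j := by
    intro J hJ
    obtain ⟨hJs, hJc⟩ := Finset.mem_powersetCard.1 hJ
    have hsplit : ∏ j ∈ s, y j = (∏ j ∈ J, y j) * ∏ j ∈ s \ J, y j := by
      rw [← Finset.prod_union (Finset.disjoint_sdiff)]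
      rw [Finset.union_sdiff_of_subset hJs]
    have hcard : (s \ J).card = k := by
      rw [Finset.card_sdiff_of_subset hJs, hJc]; omega
    have hβk : β ^ k ≤ ∏ j ∈ s \ J, y j := by
      calc β ^ k = ∏ _j ∈ s \ J, β := by rw [Finset.prod_const, hcard]
        _ ≤ ∏ j ∈ s \ J, y j :=
            Finset.prod_le_prod (fun j _ => le_of_lt hβ)
              (fun j hj => h j (Finset.mem_sdiff.1 hj).1)
    have hJpos : 0 ≤ ∏ j ∈ J, y j := Finset.prod_nonneg fun j hj => le_of_lt (hypos j (hJs hj))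
    rw [hsplit]
    exact mul_le_mul_of_nonneg_left hβk hJpos
  calc esymmOn s y (s.card - k) * β ^ k
      = ∑ J ∈ Finset.powersetCard (s.card - k) s, (∏ j ∈ J, y j) * β ^ k := by
        rw [esymmOn, Finset.sum_mul]
    _ ≤ ∑ _J ∈ Finset.powersetCard (s.card - k) s, ∏ j ∈ s, y j := Finset.sum_le_sum key
    _ = (s.card.choose (s.card - k) : ℝ) * ∏ j ∈ s, y j := by
        rw [Finset.sum_const, Finset.card_powersetCard, nsmul_eq_mul]
    _ = (s.card.choose k : ℝ) * ∏ j ∈ s, y j := by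
        rw [Nat.choose_symm hk]

lemma esymmOn_sq (s : Finset (Fin m)) (y : Fin m → ℝ) :
    (esymmOn s y 1)^2 = (∑ j ∈ s, (y j)^2) + 2 * esymmOn s y 2 := by
  induction s using Finset.induction with
  | empty => simp [esymmOn_one, esymmOn_of_card_lt (show (∅:Finset (Fin m)).card < 2 by simp)]
  | @insert a s ha ih =>
      have h1 : esymmOn (insert a s) y 1 = esymmOn s y 1 + y a * esymmOn s y 0 :=
        esymmOn_insert ha y 0
      have h2 : esymmOn (insert a s) y 2 = esymmOn s y 2 + y a * esymmOn s y 1 :=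
        esymmOn_insert ha y 1
      rw [h1, h2, esymmOn_zero, Finset.sum_insert ha]
      ring_nf
      nlinarith [ih]

lemma strip_lemma (y : Fin m → ℝ) (d : ℕ) (hdm : d ≤ m)
    (hbase : ∀ i, m - d + 2 ≤ i → i ≤ m → 0 ≤ esymmOn Finset.univ y i) :
    ∀ (N : Finset (Fin m)), (∀ j ∈ N, y j < 0) →
      ∀ i, m - d + 2 ≤ i + N.card → i + N.card ≤ m →
        0 ≤ (-1:ℝ)^N.card * esymmOn (Finset.univ \ N) y i := by
  suffices H : ∀ n (N : Finset (Fin m)), N.card = n → (∀ j ∈ N, y j < 0) →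
      ∀ i, m - d + 2 ≤ i + n → i + n ≤ m →
        0 ≤ (-1:ℝ)^n * esymmOn (Finset.univ \ N) y i by
    intro N hneg i h1 h2
    exact H N.card N rfl hneg i h1 h2
  intro n
  induction n with
  | zero =>
      intro N hcard _ i h1 h2
      rw [Finset.card_eq_zero.1 hcard, Finset.sdiff_empty, pow_zero, one_mul]
      exact hbase i (by omega) (by omega)
  | succ n ih =>
      intro N hcard hneg i h1 h2
      obtain ⟨j, hjN⟩ := Finset.card_pos.1 (by omega : 0 < N.card)
      have hcard' : (N.erase j).card = n := by
        rw [Finset.card_erase_of_mem hjN, hcard]; omega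
      have hneg' : ∀ k ∈ N.erase j, y k < 0 := fun k hk => hneg k (Finset.mem_of_mem_erase hk)
      have hyj : y j < 0 := hneg j hjN
      have hSid : Finset.univ \ (N.erase j) = insert j (Finset.univ \ N) := by
        ext k
        simp only [Finset.mem_sdiff, Finset.mem_erase, Finset.mem_insert, Finset.mem_univ,
          true_and]
        by_cases hk : k = j <;> simp [hk, hjN] <;> tauto
      have hjS : j ∉ Finset.univ \ N := by simp [hjN]
      have hcardS : (Finset.univ \ N).card = m - (n+1) := by
        rw [Finset.card_sdiff_of_subset (Finset.subset_univ N), hcard, Finset.card_univ,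
          Fintype.card_fin]
      have aux : ∀ g i', i' + (n+1) + g = m + 1 → m - d + 2 ≤ i' + (n+1) →
          0 ≤ (-1:ℝ)^(n+1) * esymmOn (Finset.univ \ N) y i' := by
        intro g
        induction g with
        | zero =>
            intro i' hg _
            have : esymmOn (Finset.univ \ N) y i' = 0 :=
              esymmOn_of_card_lt (by omega)
            rw [this, mul_zero]
        | succ g ihg =>
            intro i' hg hlo
            have h1' := ihg (i' + 1) (by omega) (by omega)
            have h2' := ih (N.erase j) hcard' hneg' (i' + 1) (by omega) (by omega)
            have hid : esymmOn (Finset.univ \ (N.erase j)) y (i' + 1)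
                = esymmOn (Finset.univ \ N) y (i' + 1)
                  + y j * esymmOn (Finset.univ \ N) y i' := by
              rw [hSid]; exact esymmOn_insert hjS y i'
            set e1 := esymmOn (Finset.univ \ N) y (i' + 1) with he1
            set e0 := esymmOn (Finset.univ \ N) y i' with he0
            set t : ℝ := (-1)^n with ht
            have hpow : (-1:ℝ)^(n+1) = -t := by rw [pow_succ]; ring
            rw [hpow] at h1' ⊢
            have hA : t * e1 ≤ 0 := by linarith
            have hB : 0 ≤ t * e1 + y j * (t * e0) := by
              rw [hid] at h2'; nlinarith [h2']
            have hC : 0 ≤ y j * (t * e0) := by linarith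
            have hD : t * e0 ≤ 0 := by
              by_contra hcon
              push_neg at hcon
              have := mul_neg_of_neg_of_pos hyj hcon
              linarith
            nlinarith [hD]
      exact aux (m + 1 - (i + (n+1))) i (by omega) h1

lemma geom_half_le (n : ℕ) : ∑ k ∈ Finset.range n, (1/2:ℝ)^k ≤ 2 := by
  have h : (1/2:ℝ) ≠ 1 := by norm_num
  rw [geom_sum_eq h]
  have : (0:ℝ) ≤ (1/2)^n := by positivity
  have h2 : ((1/2:ℝ)^n - 1)/((1/2:ℝ) - 1) = 2*(1 - (1/2)^n) := by ring
  rw [h2]; nlinarith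

lemma geom_Ico_half_le (n : ℕ) : ∑ k ∈ Finset.Ico 1 n, (1/2:ℝ)^k ≤ 1 := by
  rw [Finset.sum_Ico_eq_sum_range]
  have : ∀ k ∈ Finset.range (n-1), (1/2:ℝ)^(1+k) = (1/2) * (1/2)^k := by
    intro k _; rw [pow_add, pow_one]
  rw [Finset.sum_congr rfl this, ← Finset.mul_sum]
  nlinarith [geom_half_le (n-1), Finset.sum_nonneg (fun k (_ : k ∈ Finset.range (n-1)) => by positivity : ∀ k ∈ Finset.range (n-1), (0:ℝ) ≤ (1/2)^k)]

lemma binom_half (t : ℕ) :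
    ∑ k ∈ Finset.range (t+1), (t.choose k : ℝ)*(1/2)^k = (3/2)^t := by
  have := add_pow (1/2 : ℝ) 1 t
  simp only [one_pow, mul_one] at this
  have h32 : (3/2:ℝ) = 1/2 + 1 := by norm_num
  rw [h32, this]
  exact Finset.sum_congr rfl fun k _ => by ring

lemma binom_Ico_half (t : ℕ) :
    ∑ k ∈ Finset.Ico 1 (t+1), (t.choose k : ℝ)*(1/2)^k = (3/2)^t - 1 := by
  have h := binom_half t
  have hsplit : ∑ k ∈ Finset.range (t+1), (t.choose k : ℝ)*(1/2)^k
      = 1 + ∑ k ∈ Finset.Ico 1 (t+1), (t.choose k : ℝ)*(1/2)^k := by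
    rw [Finset.range_eq_Ico, Finset.sum_eq_sum_Ico_succ_bot (by omega : 0 < t+1)]
    norm_num
  linarith

lemma nat_4dt (d t : ℕ) : (4*d*t : ℝ) ≤ (4*(1+d):ℝ)^t := by
  have key : ∀ t : ℕ, (4*d*t : ℕ) ≤ (4*(1+d))^t ∧ 1 ≤ (4*(1+d))^t := by
    intro t
    induction t with
    | zero => simp
    | succ t ih =>
        obtain ⟨ih1, ih2⟩ := ih
        constructor
        · rw [pow_succ]
          rcases Nat.eq_zero_or_pos t with rfl | ht
          · simpa using Nat.le_mul_of_pos_left _ (by positivity)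
          · calc 4*d*(t+1) ≤ (4*d)*(4*t) := Nat.mul_le_mul (le_refl (4*d)) (by omega)
              _ = (4*d*t)*4 := by ring
              _ ≤ ((4*(1+d))^t)*(4*(1+d)) := Nat.mul_le_mul ih1 (by omega)
        · rw [pow_succ]; exact le_trans ih2 (Nat.le_mul_of_pos_right _ (by positivity))
  have := (key t).1
  calc (4*d*t : ℝ) = ((4*d*t : ℕ) : ℝ) := by push_cast; ring
    _ ≤ (((4*(1+d))^t : ℕ) : ℝ) := by exact_mod_cast this
    _ = (4*(1+d):ℝ)^t := by push_cast; ring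

lemma sum_choose_w_le (t : ℕ) (w : ℝ) (h0 : 0 ≤ w) (hw : w ≤ 1/2) :
    ∑ k ∈ Finset.Ico 1 (t+1), (t.choose k : ℝ) * w^k ≤ 2*w*((3/2)^t - 1) := by
  have step : ∀ k ∈ Finset.Ico 1 (t+1), (t.choose k : ℝ) * w^k
      ≤ 2*w*((t.choose k : ℝ)*(1/2)^k) := by
    intro k hk
    obtain ⟨hk1, _⟩ := Finset.mem_Ico.1 hk
    have hwk : w^k ≤ w * (1/2)^(k-1) := by
      calc w^k = w * w^(k-1) := by
            rw [← pow_succ']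
            congr 1; omega
        _ ≤ w * (1/2)^(k-1) := by
            apply mul_le_mul_of_nonneg_left _ h0
            exact pow_le_pow_left₀ h0 hw _
    have hch : (0:ℝ) ≤ (t.choose k : ℝ) := Nat.cast_nonneg _
    calc (t.choose k : ℝ) * w^k ≤ (t.choose k : ℝ) * (w * (1/2)^(k-1)) :=
          mul_le_mul_of_nonneg_left hwk hch
      _ = 2*w*((t.choose k : ℝ)*(1/2)^k) := by
          have : (1/2:ℝ)^k = (1/2) * (1/2)^(k-1) := by
            rw [← pow_succ']; congr 1; omega
          rw [this]; ring
  calc ∑ k ∈ Finset.Ico 1 (t+1), (t.choose k : ℝ) * w^k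
      ≤ ∑ k ∈ Finset.Ico 1 (t+1), 2*w*((t.choose k : ℝ)*(1/2)^k) := Finset.sum_le_sum step
    _ = 2*w*((3/2)^t - 1) := by rw [← Finset.mul_sum, binom_Ico_half]

lemma sum_dchoose_le (d t : ℕ) (w : ℝ) (h0 : 0 ≤ w) (hdtw : (d:ℝ)*t*w ≤ 1/2) :
    ∑ k ∈ Finset.Ico 1 (t+1), (d.choose k : ℝ)*(t.choose k)*w^k ≤ 1 := by
  have hdt0 : (0:ℝ) ≤ (d:ℝ)*t*w := by positivity
  have step : ∀ k ∈ Finset.Ico 1 (t+1), (d.choose k : ℝ)*(t.choose k)*w^k ≤ (1/2)^k := by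
    intro k _
    have h1 : (d.choose k : ℝ) ≤ (d:ℝ)^k := by exact_mod_cast Nat.choose_le_pow d k
    have h2 : (t.choose k : ℝ) ≤ (t:ℝ)^k := by exact_mod_cast Nat.choose_le_pow t k
    calc (d.choose k : ℝ)*(t.choose k)*w^k ≤ (d:ℝ)^k*(t:ℝ)^k*w^k := by
          apply mul_le_mul (mul_le_mul h1 h2 (Nat.cast_nonneg _) (by positivity)) le_rfl
            (by positivity) (by positivity)
      _ = ((d:ℝ)*t*w)^k := by rw [mul_pow, mul_pow]
      _ ≤ (1/2)^k := pow_le_pow_left₀ hdt0 hdtw k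
  calc ∑ k ∈ Finset.Ico 1 (t+1), (d.choose k : ℝ)*(t.choose k)*w^k
      ≤ ∑ k ∈ Finset.Ico 1 (t+1), (1/2:ℝ)^k := Finset.sum_le_sum step
    _ ≤ 1 := geom_Ico_half_le (t+1)

section Core
variable {d m : ℕ}

set_option maxHeartbeats 2000000 in
lemma core (hd : 2 ≤ d) (hdm : d ≤ m) (A : Finset (Fin m)) (hA : A.card = d)
    (y : Fin m → ℝ) (ε γ : ℝ) (hε : 0 ≤ ε) (hγ1 : γ < 1) (hγ0 : 0 ≤ γ)
    (ha : ∀ j ∈ A, |y j| ≤ ε)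
    (hb1 : ∀ j ∈ Finset.univ \ A, (1-γ)/2 ≤ y j)
    (hsym : ∀ i, m - d + 2 ≤ i → i ≤ m → 0 ≤ esymmOn Finset.univ y i)
    (h1 : ε ≤ ((1 - γ) / (4 * (1 + (d:ℝ)))) ^ (m - d))
    (h3 : ε ≤ 5 * (1 - γ) ^ (m - d) /
      (18 * (d.choose (d / 2) : ℝ) * 2 ^ (m - d) * (3 ^ (m - d) - 2 ^ (m - d)))) :
    (∀ j, 0 ≤ y j) ∨ ((2/3) * Real.sqrt (∑ j ∈ A, (y j)^2) ≤ -(∑ j ∈ A, y j)) := by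
  classical
  obtain ⟨t, htdef⟩ : ∃ t, t = m - d := ⟨_, rfl⟩
  obtain ⟨β, hβdef⟩ : ∃ b : ℝ, b = (1-γ)/2 := ⟨_, rfl⟩
  obtain ⟨C, hCdef⟩ : ∃ c : ℝ, c = (d.choose (d / 2) : ℝ) := ⟨_, rfl⟩
  obtain ⟨S, hSdef⟩ : ∃ s : ℝ, s = ∑ j ∈ A, (y j)^2 := ⟨_, rfl⟩
  obtain ⟨w, hwdef⟩ : ∃ u : ℝ, u = ε / β := ⟨_, rfl⟩
  rw [← htdef] at h1 h3 hsym
  rw [← hCdef] at h3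
  rw [← hβdef] at hb1
  rw [← hSdef]
  set B : Finset (Fin m) := Finset.univ \ A with hBdef
  have hβ : 0 < β := by rw [hβdef]; linarith
  have hBcard : B.card = t := by
    rw [hBdef, Finset.card_sdiff_of_subset (Finset.subset_univ _), Finset.card_univ, Fintype.card_fin,
      hA, htdef]
  have hdisj : Disjoint A B := Finset.disjoint_sdiff
  have hunion : A ∪ B = Finset.univ := Finset.union_sdiff_of_subset (Finset.subset_univ A)
  have hbpos : ∀ j ∈ B, 0 < y j := fun j hj => lt_of_lt_of_le hβ (hb1 j hj)
  have hτnn : ∀ k, 0 ≤ esymmOn B y k :=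
    fun k => esymmOn_nonneg (fun j hj => (hbpos j hj).le) k
  have hτprod : esymmOn B y t = ∏ j ∈ B, y j := by rw [← hBcard, esymmOn_self]
  have hτt : 0 < esymmOn B y t := by rw [hτprod]; exact Finset.prod_pos hbpos
  have hC1 : (1:ℝ) ≤ C := by
    rw [hCdef]; exact_mod_cast Nat.one_le_iff_ne_zero.2 (Nat.choose_pos (Nat.div_le_self d 2)).ne'
  have hC0 : (0:ℝ) < C := lt_of_lt_of_le one_pos hC1
  have hS0 : 0 ≤ S := hSdef ▸ Finset.sum_nonneg fun j _ => sq_nonneg _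
  have hS20 : (0:ℝ) ≤ S/2 := by linarith
  have hw0 : 0 ≤ w := hwdef ▸ div_nonneg hε hβ.le
  -- σ_k abs bounds
  have hσk : ∀ k, 2 ≤ k → |esymmOn A y k| ≤ C * ε^(k-2) * (S/2) := by
    intro k hk
    calc |esymmOn A y k| ≤ (A.card.choose k : ℝ) * ε^(k-2) * ((∑ j ∈ A, (y j)^2)/2) :=
          esymmOn_abs_le_pair hε ha hk
      _ ≤ C * ε^(k-2) * (S/2) := by
          rw [← hSdef]
          apply mul_le_mul_of_nonneg_right _ hS20
          apply mul_le_mul_of_nonneg_right _ (pow_nonneg hε _)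
          rw [hA, hCdef]
          exact_mod_cast Nat.choose_le_middle k d
  -- τ ratio bounds
  have hτk : ∀ k, k ≤ t → esymmOn B y (t - k) * β^k ≤ (t.choose k : ℝ) * esymmOn B y t := by
    intro k hk
    have := esymmOn_ratio (s := B) (y := y) hβ (fun j hj => hb1 j hj) (k := k) (by omega)
    rw [hBcard] at this
    rw [hτprod]
    exact this
  have hτub : ∀ k, k ≤ t →
      esymmOn B y (t-k) ≤ (t.choose k : ℝ) * esymmOn B y t / β^k := by
    intro k hk
    rw [le_div_iff₀ (by positivity)]
    exact hτk k hk
  -- w ≤ 1/2 when t ≥ 1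
  have hwhalf : 1 ≤ t → w ≤ 1/2 := by
    intro ht1
    have hb0 : (0:ℝ) ≤ (1 - γ) / (4 * (1 + (d:ℝ))) := div_nonneg (by linarith) (by positivity)
    have hble : (1 - γ) / (4 * (1 + (d:ℝ))) ≤ 1 := by
      rw [div_le_one (by positivity)]
      have : (2:ℝ) ≤ (d:ℝ) := by exact_mod_cast hd
      nlinarith
    have hεb : ε ≤ (1 - γ) / (4 * (1 + (d:ℝ))) :=
      h1.trans (pow_le_of_le_one hb0 hble (by omega))
    have hεq : ε ≤ (1-γ)/4 := by
      refine hεb.trans ?_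
      apply div_le_div_of_nonneg_left (by linarith) (by norm_num)
      have : (0:ℝ) ≤ (d:ℝ) := Nat.cast_nonneg d
      nlinarith
    rw [hwdef, div_le_iff₀ hβ, hβdef]
    linarith
  -- σ₂ lower bound
  have hsigma2 : -((5:ℝ)/18) * S ≤ esymmOn A y 2 := by
    have hs2 := hsym (t+2) (by omega) (by omega)
    rw [← hunion, esymmOn_union hdisj] at hs2
    have key : esymmOn A y 2 * esymmOn B y t
        + ∑ k ∈ Finset.Ico 3 (t+3), esymmOn A y k * esymmOn B y (t+2-k)
        = ∑ k ∈ Finset.range (t+2+1), esymmOn A y k * esymmOn B y (t+2-k) := by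
      rw [Finset.range_eq_Ico]
      rw [Finset.sum_eq_sum_Ico_succ_bot (by omega : 0 < t+2+1)]
      rw [Finset.sum_eq_sum_Ico_succ_bot (by omega : 0+1 < t+2+1)]
      rw [Finset.sum_eq_sum_Ico_succ_bot (by omega : 0+1+1 < t+2+1)]
      have e0 : esymmOn B y (t+2-0) = 0 := esymmOn_of_card_lt (by rw [hBcard]; omega)
      have e1 : esymmOn B y (t+2-(0+1)) = 0 := esymmOn_of_card_lt (by rw [hBcard]; omega)
      have e2 : t+2-(0+1+1) = t := by omega
      have e3 : (0:ℕ)+1+1+1 = 3 := by omega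
      have e4 : t+2+1 = t+3 := by omega
      rw [e0, e1, e2, e3, e4, mul_zero, mul_zero]
      ring
    have hIco : ∑ k ∈ Finset.Ico 3 (t+3), esymmOn A y k * esymmOn B y (t+2-k)
        ≤ (C * (S/2) * esymmOn B y t) * ∑ j ∈ Finset.Ico 1 (t+1), (t.choose j : ℝ) * w^j := by
      rw [Finset.mul_sum, Finset.sum_Ico_eq_sum_range, Finset.sum_Ico_eq_sum_range]
      have e5 : t+3-3 = t := by omega
      have e6 : t+1-1 = t := by omega
      rw [e5, e6]
      apply Finset.sum_le_sum
      intro i hi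
      have hit : i < t := Finset.mem_range.1 hi
      have hidx : t + 2 - (3+i) = t - (1+i) := by omega
      rw [hidx]
      have hσub : |esymmOn A y (3+i)| ≤ C * ε^(1+i) * (S/2) := by
        have h' := hσk (3+i) (by omega)
        have e7 : 3+i-2 = 1+i := by omega
        rwa [e7] at h'
      have hεp : (0:ℝ) ≤ C * ε^(1+i) * (S/2) :=
        mul_nonneg (mul_nonneg hC0.le (pow_nonneg hε _)) hS20
      calc esymmOn A y (3+i) * esymmOn B y (t-(1+i))
          ≤ |esymmOn A y (3+i)| * esymmOn B y (t-(1+i)) :=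
            mul_le_mul_of_nonneg_right (le_abs_self _) (hτnn _)
        _ ≤ (C * ε^(1+i) * (S/2)) * ((t.choose (1+i) : ℝ) * esymmOn B y t / β^(1+i)) := by
            apply mul_le_mul hσub (hτub (1+i) (by omega)) (hτnn _) hεp
        _ = C * (S/2) * esymmOn B y t * ((t.choose (1+i) : ℝ) * w^(1+i)) := by
            rw [hwdef, div_pow, div_eq_mul_inv, div_eq_mul_inv]
            ring
    rcases Nat.eq_zero_or_pos t with ht0 | ht1
    · -- t = 0 : the Ico-sum is empty, σ₂ ≥ 0
      have hempty : Finset.Ico 3 (t+3) = ∅ := by rw [ht0]; rfl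
      rw [hempty, Finset.sum_empty, add_zero] at key
      have h2' : 0 ≤ esymmOn A y 2 * esymmOn B y t := key ▸ hs2
      nlinarith [hτt, hS0]
    · -- t ≥ 1
      have hw2 := hwhalf ht1
      have hsum := sum_choose_w_le t w hw0 hw2
      have hKnn : (0:ℝ) ≤ C * (S/2) * esymmOn B y t :=
        mul_nonneg (mul_nonneg hC0.le hS20) hτt.le
      have hcomb : -(esymmOn A y 2) * esymmOn B y t
          ≤ (C * (S/2) * esymmOn B y t) * (2*w*((3/2)^t - 1)) := by
        have hb := mul_le_mul_of_nonneg_left hsum hKnn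
        linarith [hs2, key, hIco, hb]
      -- numeric bound : C * w * ((3^t - 2^t)/2^t) ≤ 5/18
      have hγpos : (0:ℝ) < 1 - γ := by linarith
      have hXpos : (0:ℝ) < 3^t - 2^t := by
        have : (2:ℝ)^t < 3^t := by
          apply pow_lt_pow_left₀ (by norm_num) (by norm_num)
          omega
        linarith
      have h2t : (2:ℝ) ≤ 2^t := by
        calc (2:ℝ) = 2^1 := (pow_one 2).symm
          _ ≤ 2^t := pow_le_pow_right₀ (by norm_num) ht1
      have hden : (0:ℝ) < 18 * C * 2^t * (3^t - 2^t) := by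
        apply mul_pos (mul_pos (mul_pos (by norm_num) hC0) (by positivity)) hXpos
      have h3' : ε * (18 * C * 2^t * (3^t - 2^t)) ≤ 5 * (1-γ)^t := by
        rw [← le_div_iff₀ hden]; exact h3
      have hγt : (1-γ)^t ≤ (1-γ) := pow_le_of_le_one hγpos.le (by linarith) (by omega)
      have hfin : 36 * (C * ε * (3^t - 2^t)) ≤ 5 * (1-γ) * 2^t := by
        have ha0 : (0:ℝ) ≤ C * ε * (3^t - 2^t) :=
          mul_nonneg (mul_nonneg hC0.le hε) hXpos.le
        have e1 : (0:ℝ) ≤ (C * ε * (3^t - 2^t)) * (2^t - 2) :=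
          mul_nonneg ha0 (by linarith)
        have e2 : (0:ℝ) ≤ (1-γ) * (2^t - 1) :=
          mul_nonneg hγpos.le (by linarith)
        nlinarith [h3', hγt, e1, e2]
      have hX : (3/2:ℝ)^t - 1 = (3^t - 2^t)/2^t := by
        rw [div_pow, sub_div, div_self (by positivity : ((2:ℝ)^t) ≠ 0)]
      have hwβ : w * β = ε := by rw [hwdef]; exact div_mul_cancel₀ ε hβ.ne'
      have hnum : C * w * ((3^t - 2^t)/2^t) ≤ 5/18 := by
        rw [← mul_div_assoc, div_le_iff₀ (by positivity : (0:ℝ) < 2^t)]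
        rw [← mul_le_mul_iff_of_pos_right hβ]
        have hre2 : C * w * (3^t - 2^t) * β = C * ε * (3^t - 2^t) := by
          rw [← hwβ]; ring
        rw [hre2, hβdef]
        linarith [hfin]
      -- put together
      have hdiv : -(esymmOn A y 2) ≤ (C * (S/2)) * (2*w*((3/2)^t - 1)) := by
        have hre : (C * (S/2) * esymmOn B y t) * (2*w*((3/2)^t - 1))
            = ((C * (S/2)) * (2*w*((3/2)^t - 1))) * esymmOn B y t := by ring
        rw [hre] at hcomb
        exact le_of_mul_le_mul_right (by linarith [hcomb]) hτt
      have hrw2 : (C * (S/2)) * (2*w*((3/2)^t - 1)) = S * (C * w * ((3^t-2^t)/2^t)) := by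
        rw [hX]; ring
      rw [hrw2] at hdiv
      have := mul_le_mul_of_nonneg_left hnum hS0
      nlinarith [hdiv, this]
  -- main case split
  by_cases hN : (A.filter (fun j => y j < 0)).Nonempty
  · right
    have hsigma1 : ∑ j ∈ A, y j ≤ 0 := by
      obtain ⟨N, hNdef⟩ : ∃ N, N = A.filter (fun j => y j < 0) := ⟨_, rfl⟩
      rw [← hNdef] at hN
      have hNsub : N ⊆ A := hNdef ▸ Finset.filter_subset _ _
      have hNneg : ∀ j ∈ N, y j < 0 := by
        intro j hj
        rw [hNdef] at hj
        exact (Finset.mem_filter.1 hj).2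
      have hJd : N.card ≤ d := hA ▸ Finset.card_le_card hNsub
      have hJ1 : 1 ≤ N.card := Finset.card_pos.2 hN
      obtain ⟨Ap, hApdef⟩ : ∃ ap, ap = A \ N := ⟨_, rfl⟩
      have hApnn : ∀ j ∈ Ap, 0 ≤ y j := by
        intro j hj
        obtain ⟨hjA, hjN⟩ := Finset.mem_sdiff.1 (hApdef ▸ hj)
        by_contra hcon
        exact hjN (hNdef ▸ Finset.mem_filter.2 ⟨hjA, by linarith⟩)
      have hsplitA : ∑ j ∈ A, y j = ∑ j ∈ Ap, y j + ∑ j ∈ N, y j := by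
        rw [hApdef]; exact (Finset.sum_sdiff hNsub).symm
      have hNsum : ∑ j ∈ N, y j ≤ 0 :=
        Finset.sum_nonpos fun j hj => (hNneg j hj).le
      have hid1 : Finset.univ \ N = Ap ∪ B := by
        ext k
        simp only [Finset.mem_sdiff, Finset.mem_union, Finset.mem_univ, true_and, hApdef,
          hBdef]
        constructor
        · intro hkN
          by_cases hkA : k ∈ A
          · exact Or.inl ⟨hkA, hkN⟩
          · exact Or.inr hkA
        · rintro (⟨_, hk⟩ | hk)
          · exact hk
          · exact fun hkN => hk (hNsub hkN)
      have hdisj2 : Disjoint Ap B := by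
        rw [hApdef, hBdef]
        exact Finset.disjoint_of_subset_left (Finset.sdiff_subset) Finset.disjoint_sdiff
      have hexp : ∀ n, esymmOn (Finset.univ \ N) y n
          = ∑ k ∈ Finset.range (n + 1), esymmOn Ap y k * esymmOn B y (n - k) := by
        intro n; rw [hid1, esymmOn_union hdisj2]
      have hbase : ∀ i, m - d + 2 ≤ i → i ≤ m → 0 ≤ esymmOn Finset.univ y i :=
        fun i hi1 hi2 => hsym i (by omega) hi2
      have hUNnn : ∀ j ∈ Finset.univ \ N, 0 ≤ y j := by
        intro j hj
        rw [hid1] at hj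
        rcases Finset.mem_union.1 hj with hj | hj
        · exact hApnn j hj
        · exact (hbpos j hj).le
      -- L1 : p * τ_t ≤ σ_{t+1}(univ \ N)
      have hL1 : (∑ j ∈ Ap, y j) * esymmOn B y t ≤ esymmOn (Finset.univ \ N) y (t+1) := by
        rw [hexp (t+1)]
        have h1mem : 1 ∈ Finset.range (t+1+1) := Finset.mem_range.2 (by omega)
        have := Finset.single_le_sum
          (f := fun k => esymmOn Ap y k * esymmOn B y (t+1-k))
          (fun k _ => mul_nonneg (esymmOn_nonneg hApnn k) (hτnn _)) h1mem
        calc (∑ j ∈ Ap, y j) * esymmOn B y t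
            = esymmOn Ap y 1 * esymmOn B y (t+1-1) := by rw [esymmOn_one, Nat.add_sub_cancel]
          _ ≤ _ := this
      -- σ_{t+1}(univ\N) and σ_t(univ\N) nonneg
      have hσtnn : 0 ≤ esymmOn (Finset.univ \ N) y t := esymmOn_nonneg hUNnn t
      rcases Nat.even_or_odd N.card with hev | hod
      · -- even J, J ≥ 2
        have hJ2 : 2 ≤ N.card := by
          rcases Nat.lt_or_ge N.card 2 with h | h
          · interval_cases h' : N.card <;> simp_all [Nat.even_iff]
          · exact h
        obtain ⟨js, hjsN, hjsmax⟩ := Finset.exists_max_image N y hN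
        have hjsneg : y js < 0 := hNneg js hjsN
        have hNey : ∀ j ∈ N.erase js, y j < 0 := fun j hj => hNneg j (Finset.mem_of_mem_erase hj)
        have hcardE : (N.erase js).card = N.card - 1 := Finset.card_erase_of_mem hjsN
        have hstrip := strip_lemma y d hdm hbase (N.erase js) hNey (t+1)
          (by rw [hcardE]; omega) (by rw [hcardE]; omega)
        have hoddE : Odd (N.erase js).card := by
          rw [hcardE]
          exact Nat.Even.sub_odd (by omega) hev odd_one
        rw [hoddE.neg_one_pow] at hstrip
        have hins : Finset.univ \ (N.erase js) = insert js (Finset.univ \ N) := by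
          ext k
          simp only [Finset.mem_sdiff, Finset.mem_erase, Finset.mem_insert, Finset.mem_univ,
            true_and]
          by_cases hk : k = js <;> simp [hk, hjsN] <;> tauto
        have hjsS : js ∉ Finset.univ \ N := by simp [hjsN]
        have hkey : esymmOn (Finset.univ \ N) y (t+1)
            + y js * esymmOn (Finset.univ \ N) y t ≤ 0 := by
          have hidp : esymmOn (Finset.univ \ (N.erase js)) y (t+1)
              = esymmOn (Finset.univ \ N) y (t+1)
                + y js * esymmOn (Finset.univ \ N) y t := by
            rw [hins]; exact esymmOn_insert hjsS y t
          nlinarith [hstrip, hidp]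
        -- L2 : σ_t(univ\N) ≤ 2 τ_t
        have hdtw : (d:ℝ)*(t:ℝ)*w ≤ 1/2 := by
          rcases Nat.eq_zero_or_pos t with ht0 | ht1
          · rw [ht0]; norm_num
          · have hγpos : (0:ℝ) < 1 - γ := by linarith
            have h4dt := nat_4dt d t
            have hQpos : (0:ℝ) < (4*(1+(d:ℝ)))^t := by positivity
            have hγt : (1-γ)^t ≤ (1-γ) := pow_le_of_le_one hγpos.le (by linarith) (by omega)
            have hεle : ε ≤ (1-γ)/(4*(1+(d:ℝ)))^t := by
              refine h1.trans ?_
              rw [div_pow]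
              exact (div_le_div_iff_of_pos_right hQpos).2 hγt
            have hdtnn : (0:ℝ) ≤ 2*(d:ℝ)*(t:ℝ) := by positivity
            have key : 2*(d:ℝ)*(t:ℝ)*ε ≤ (1/2)*(1-γ) := by
              have step1 : 2*(d:ℝ)*(t:ℝ)*ε ≤ 2*(d:ℝ)*(t:ℝ)*((1-γ)/(4*(1+(d:ℝ)))^t) := by
                exact mul_le_mul_of_nonneg_left hεle hdtnn
              have step2 : 2*(d:ℝ)*(t:ℝ)*((1-γ)/(4*(1+(d:ℝ)))^t) ≤ (1/2)*(1-γ) := by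
                rw [← mul_div_assoc, div_le_iff₀ hQpos]
                nlinarith [mul_le_mul_of_nonneg_left h4dt hγpos.le]
              linarith
            have hwG : w * (1-γ) = 2*ε := by
              rw [hwdef, hβdef]
              field_simp
            rw [← mul_le_mul_iff_of_pos_right hγpos]
            calc (d:ℝ)*(t:ℝ)*w*(1-γ) = (d:ℝ)*(t:ℝ)*(w*(1-γ)) := by ring
              _ = (d:ℝ)*(t:ℝ)*(2*ε) := by rw [hwG]
              _ = 2*(d:ℝ)*(t:ℝ)*ε := by ring
              _ ≤ (1/2)*(1-γ) := key
        have hL2 : esymmOn (Finset.univ \ N) y t ≤ 2 * esymmOn B y t := by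
          rw [hexp t]
          have hsplit2 : ∑ k ∈ Finset.range (t+1), esymmOn Ap y k * esymmOn B y (t-k)
              = esymmOn B y t
                + ∑ k ∈ Finset.Ico 1 (t+1), esymmOn Ap y k * esymmOn B y (t-k) := by
            rw [Finset.range_eq_Ico, Finset.sum_eq_sum_Ico_succ_bot (by omega : 0 < t+1)]
            rw [esymmOn_zero, one_mul]
            norm_num
          rw [hsplit2]
          have hIco2 : ∑ k ∈ Finset.Ico 1 (t+1), esymmOn Ap y k * esymmOn B y (t-k)
              ≤ esymmOn B y t * ∑ k ∈ Finset.Ico 1 (t+1), (d.choose k : ℝ)*(t.choose k)*w^k := by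
            rw [Finset.mul_sum]
            apply Finset.sum_le_sum
            intro k hk
            obtain ⟨hk1, hk2⟩ := Finset.mem_Ico.1 hk
            have hkt : k ≤ t := by omega
            have hApub : esymmOn Ap y k ≤ (d.choose k : ℝ) * ε^k := by
              calc esymmOn Ap y k ≤ (Ap.card.choose k : ℝ) * ε^k :=
                    esymmOn_le hε hApnn
                      (fun j hj => (abs_le.1 (ha j ((hApdef ▸ Finset.sdiff_subset) hj))).2) k
                _ ≤ (d.choose k : ℝ) * ε^k := by
                    apply mul_le_mul_of_nonneg_right _ (pow_nonneg hε _)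
                    have : Ap.card ≤ d := by
                      rw [hApdef, ← hA]; exact Finset.card_le_card Finset.sdiff_subset
                    exact_mod_cast Nat.choose_le_choose k this
            calc esymmOn Ap y k * esymmOn B y (t-k)
                ≤ ((d.choose k : ℝ) * ε^k) * ((t.choose k : ℝ) * esymmOn B y t / β^k) := by
                  apply mul_le_mul hApub (hτub k hkt) (hτnn _)
                    (mul_nonneg (Nat.cast_nonneg _) (pow_nonneg hε _))
              _ = esymmOn B y t * ((d.choose k : ℝ)*(t.choose k)*w^k) := by
                  rw [hwdef, div_pow, div_eq_mul_inv, div_eq_mul_inv]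
                  ring
          have hd1 := sum_dchoose_le d t w hw0 hdtw
          nlinarith [hIco2, hd1, hτt]
        -- combine
        have hppos : (∑ j ∈ Ap, y j) * esymmOn B y t ≤ (-(y js)) * (2 * esymmOn B y t) := by
          have hstep : esymmOn (Finset.univ \ N) y (t+1) ≤ (-(y js)) * esymmOn (Finset.univ \ N) y t := by
            nlinarith [hkey]
          calc (∑ j ∈ Ap, y j) * esymmOn B y t ≤ esymmOn (Finset.univ \ N) y (t+1) := hL1
            _ ≤ (-(y js)) * esymmOn (Finset.univ \ N) y t := hstep
            _ ≤ (-(y js)) * (2 * esymmOn B y t) :=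
                mul_le_mul_of_nonneg_left hL2 (by linarith)
        have hple : ∑ j ∈ Ap, y j ≤ 2 * (-(y js)) := by
          have hre : (-(y js)) * (2 * esymmOn B y t) = (2 * (-(y js))) * esymmOn B y t := by ring
          rw [hre] at hppos
          exact le_of_mul_le_mul_right hppos hτt
        have hNsum2 : ∑ j ∈ N, y j ≤ (N.card : ℝ) * y js := by
          have := Finset.sum_le_card_nsmul N y (y js) (fun j hj => hjsmax j hj)
          rwa [nsmul_eq_mul] at this
        have hJcast : (2:ℝ) ≤ (N.card : ℝ) := by exact_mod_cast hJ2
        rw [hsplitA]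
        nlinarith [hple, hNsum2, hJcast, hjsneg]
      · -- odd J
        rcases Nat.lt_or_ge N.card d with hJlt | hJge
        · -- J ≤ d - 1 : use the strip lemma at N itself
          have hstrip := strip_lemma y d hdm hbase N hNneg (t+1)
            (by omega) (by omega)
          rw [hod.neg_one_pow] at hstrip
          have hple : ∑ j ∈ Ap, y j ≤ 0 := by
            have h0 : esymmOn (Finset.univ \ N) y (t+1) ≤ 0 := by linarith [hstrip]
            nlinarith [hL1, h0, hτt]
          rw [hsplitA]
          linarith
        · -- J = d : all of A is negative
          have hNA : N = A := Finset.eq_of_subset_of_card_le hNsub (by omega)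
          rw [← hNA]
          linarith [hNsum, hNsum]
    -- conclude cone inequality
    have hsq : (∑ j ∈ A, y j)^2 = S + 2 * esymmOn A y 2 := by
      rw [← esymmOn_one, hSdef]; exact esymmOn_sq A y
    have h49 : (4/9) * S ≤ (∑ j ∈ A, y j)^2 := by
      rw [hsq]; linarith
    have hL : 0 ≤ -(∑ j ∈ A, y j) := by linarith
    have h23 : (0:ℝ) ≤ (2/3) * Real.sqrt S := by positivity
    have hsq2 : ((2/3) * Real.sqrt S)^2 ≤ (-(∑ j ∈ A, y j))^2 := by
      rw [mul_pow, neg_pow]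
      rw [Real.sq_sqrt hS0]
      calc (2/3:ℝ)^2 * S = (4/9) * S := by norm_num
        _ ≤ (∑ j ∈ A, y j)^2 := h49
        _ = (-1)^2 * (∑ j ∈ A, y j)^2 := by ring
    exact (pow_le_pow_iff_left₀ h23 hL two_ne_zero).1 hsq2
  · left
    intro j
    by_cases hjA : j ∈ A
    · by_contra hneg
      exact hN ⟨j, Finset.mem_filter.2 ⟨hjA, by linarith⟩⟩
    · exact le_trans hβ.le (hb1 j (by simp [hBdef, hjA]))

end Core

section Geometry
variable {d m : ℕ}

lemma FacetRep.Pne (R : FacetRep d m) : R.P.Nonempty :=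
  R.fulldim.mono interior_subset

lemma FacetRep.diam_pos (R : FacetRep d m) (hd : 1 ≤ d) : 0 < Metric.diam R.P := by
  obtain ⟨z, hz⟩ := R.fulldim
  obtain ⟨r, hr, hball⟩ := Metric.isOpen_iff.1 isOpen_interior z hz
  have hd0 : Nonempty (Fin d) := ⟨⟨0, by omega⟩⟩
  set w : E d := (r/2) • EuclideanSpace.single (Classical.arbitrary (Fin d)) (1:ℝ) with hw
  have hnw : ‖w‖ = r/2 := by
    rw [hw, norm_smul, EuclideanSpace.norm_single]
    simp only [Real.norm_eq_abs, norm_one, mul_one]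
    rw [abs_div]
    rw [abs_of_pos hr]
    norm_num
  have hzw : z + w ∈ R.P := by
    apply interior_subset
    apply hball
    rw [Metric.mem_ball, dist_eq_norm]
    simp only [add_sub_cancel_left]
    rw [hnw]; linarith
  have hzP : z ∈ R.P := interior_subset hz
  have hdist : dist (z + w) z = r/2 := by rw [dist_eq_norm]; simp [hnw]
  calc (0:ℝ) < r/2 := by linarith
    _ = dist (z+w) z := hdist.symm
    _ ≤ Metric.diam R.P := Metric.dist_le_diam_of_mem R.compact.isBounded hzw hzP

lemma FacetRep.exists_supp (R : FacetRep d m) (u : E d) :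
    ∃ p ∈ R.P, (∀ z ∈ R.P, ⟪u, z⟫ ≤ ⟪u, p⟫) ∧ supp R.P u = ⟪u, p⟫ := by
  have hcont : Continuous fun z : E d => ⟪u, z⟫ := Continuous.inner continuous_const continuous_id
  obtain ⟨p, hp, hmax⟩ := R.compact.exists_isMaxOn R.Pne hcont.continuousOn
  have hmax' : ∀ z ∈ R.P, ⟪u, z⟫ ≤ ⟪u, p⟫ := fun z hz => by exact hmax hz
  refine ⟨p, hp, hmax', ?_⟩
  apply IsGreatest.csSup_eq
  exact ⟨Set.mem_image_of_mem _ hp, by rintro c ⟨z, hz, rfl⟩; exact hmax' z hz⟩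

lemma FacetRep.q_nonneg (R : FacetRep d m) {x : E d} (hx : x ∈ R.P) (j : Fin m) :
    0 ≤ R.q x j := by
  rw [R.rep] at hx
  exact hx j

lemma FacetRep.q_le_one (R : FacetRep d m) (hd : 1 ≤ d) {x : E d} (hx : x ∈ R.P) (j : Fin m) :
    R.q x j ≤ 1 := by
  obtain ⟨p, hp, hmax, hsupp⟩ := R.exists_supp (R.u j)
  have hdiam := R.diam_pos hd
  rw [FacetRep.q, qf, div_le_one hdiam, hsupp]
  have h1 : ⟪R.u j, p⟫ - ⟪R.u j, x⟫ = ⟪R.u j, p - x⟫ := (inner_sub_right _ _ _).symm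
  rw [h1]
  calc ⟪R.u j, p - x⟫ ≤ ‖R.u j‖ * ‖p - x‖ := real_inner_le_norm _ _
    _ = ‖p - x‖ := by rw [(R.facet j).1, one_mul]
    _ = dist p x := (dist_eq_norm p x).symm
    _ ≤ Metric.diam R.P := Metric.dist_le_diam_of_mem R.compact.isBounded hp hx

lemma FacetRep.q_sub (R : FacetRep d m) (hd : 1 ≤ d) (x z : E d) (j : Fin m) :
    R.q x j - R.q z j = ⟪R.u j, z - x⟫ / Metric.diam R.P := by
  rw [FacetRep.q, FacetRep.q, qf, qf, div_sub_div_same, inner_sub_right]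
  ring_nf

lemma FacetRep.q_lip (R : FacetRep d m) (hd : 1 ≤ d) (x z : E d) (j : Fin m) :
    R.q x j - R.q z j ≤ ‖z - x‖ / Metric.diam R.P := by
  rw [R.q_sub hd x z j]
  rw [div_le_div_iff_of_pos_right (R.diam_pos hd)]
  calc ⟪R.u j, z - x⟫ ≤ ‖R.u j‖ * ‖z - x‖ := real_inner_le_norm _ _
    _ = ‖z - x‖ := by rw [(R.facet j).1, one_mul]

lemma FacetRep.q_vertex_zero (R : FacetRep d m) {v : E d} {j : Fin m}
    (hj : j ∈ R.act v) : R.q v j = 0 := (Finset.mem_filter.1 hj).2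

lemma FacetRep.q_vertex_pos (R : FacetRep d m) {v : E d} (hv : v ∈ vertices R.P)
    {j : Fin m} (hj : j ∉ R.act v) : 0 < R.q v j := by
  have h0 : R.q v j ≠ 0 := by
    intro h
    exact hj (Finset.mem_filter.2 ⟨Finset.mem_univ j, h⟩)
  have h1 : 0 ≤ R.q v j := R.q_nonneg (extremePoints_subset hv) j
  exact lt_of_le_of_ne h1 (Ne.symm h0)

lemma FacetRep.q_smul (R : FacetRep d m) (v z : E d) (c : ℝ) (j : Fin m) :
    R.q (v + c • z) j = R.q v j - c * ⟪R.u j, z⟫ / Metric.diam R.P := by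
  rw [FacetRep.q, FacetRep.q, qf, qf, inner_add_right, real_inner_smul_right]
  ring

lemma FacetRep.span_at_vertex (R : FacetRep d m) (hd : 1 ≤ d) {v : E d}
    (hv : v ∈ vertices R.P) (z : E d) (hz : ∀ j ∈ R.act v, ⟪R.u j, z⟫ = 0) : z = 0 := by
  by_contra hz0
  have hdiam := R.diam_pos hd
  have hδ : ∃ δ : ℝ, 0 < δ ∧ ∀ j, j ∉ R.act v → δ ≤ R.q v j := by
    by_cases hI : ((Finset.univ : Finset (Fin m)) \ R.act v).Nonempty
    · obtain ⟨j0, hj0, hmin⟩ := Finset.exists_min_image _ (R.q v) hI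
      have hj0' : j0 ∉ R.act v := (Finset.mem_sdiff.1 hj0).2
      exact ⟨R.q v j0, R.q_vertex_pos hv hj0', fun j hj =>
        hmin j (Finset.mem_sdiff.2 ⟨Finset.mem_univ j, hj⟩)⟩
    · exact ⟨1, one_pos, fun j hj =>
        absurd ⟨j, Finset.mem_sdiff.2 ⟨Finset.mem_univ j, hj⟩⟩ hI⟩
  obtain ⟨δ, hδ0, hδle⟩ := hδ
  have hzpos : 0 < ‖z‖ := norm_pos_iff.2 hz0
  set c := Metric.diam R.P * δ / (‖z‖ + 1) with hcdef
  have hc0 : 0 < c := div_pos (mul_pos hdiam hδ0) (by positivity)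
  have hkey : ∀ (a : ℝ), |a| ≤ c → v + a • z ∈ R.P := by
    intro a hac
    rw [R.rep]
    intro j
    show 0 ≤ qf R.P (R.u j) (v + a • z)
    have hq : qf R.P (R.u j) (v + a • z) = R.q v j - a * ⟪R.u j, z⟫ / Metric.diam R.P :=
      R.q_smul v z a j
    rw [hq]
    by_cases hj : j ∈ R.act v
    · rw [hz j hj, R.q_vertex_zero hj]; simp
    · have hip : |⟪R.u j, z⟫| ≤ ‖z‖ := by
        calc |⟪R.u j, z⟫| ≤ ‖R.u j‖ * ‖z‖ := abs_real_inner_le_norm _ _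
          _ = ‖z‖ := by rw [(R.facet j).1, one_mul]
      have h1 : a * ⟪R.u j, z⟫ ≤ |a| * ‖z‖ := by
        calc a * ⟪R.u j, z⟫ ≤ |a * ⟪R.u j, z⟫| := le_abs_self _
          _ = |a| * |⟪R.u j, z⟫| := abs_mul _ _
          _ ≤ |a| * ‖z‖ := mul_le_mul_of_nonneg_left hip (abs_nonneg a)
      have h2 : |a| * ‖z‖ ≤ Metric.diam R.P * δ := by
        calc |a| * ‖z‖ ≤ c * ‖z‖ := mul_le_mul_of_nonneg_right hac (norm_nonneg z)
          _ ≤ Metric.diam R.P * δ := by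
              rw [hcdef, div_mul_eq_mul_div, div_le_iff₀ (by positivity : (0:ℝ) < ‖z‖ + 1)]
              nlinarith [mul_pos hdiam hδ0]
      have h3 : a * ⟪R.u j, z⟫ / Metric.diam R.P ≤ δ := by
        rw [div_le_iff₀ hdiam]
        nlinarith [h1, h2]
      have h4 := hδle j hj
      linarith
  have hxp := hkey c (by rw [abs_of_pos hc0])
  have hxm := hkey (-c) (by rw [abs_neg, abs_of_pos hc0])
  have hseg : v ∈ openSegment ℝ (v + (-c) • z) (v + c • z) := by
    refine ⟨1/2, 1/2, by norm_num, by norm_num, by norm_num, ?_⟩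
    module
  have hve := hv.2 hxm hxp hseg
  have h5 : v + c • z = v := hv.2 hxp hxm (by rw [openSegment_symm]; exact hseg)
  have h6 : c • z = 0 := by
    have := h5
    rwa [add_eq_left] at this
  rcases smul_eq_zero.1 h6 with h | h
  · exact hc0.ne' h
  · exact hz0 h

lemma FacetRep.invNormU_spec (R : FacetRep d m) (hd : 1 ≤ d) {v : E d}
    (hv : v ∈ vertices R.P) :
    0 < invNormU R.u (R.act v) ∧
    ∀ z : E d, ‖z‖ ≤ invNormU R.u (R.act v) *
      Real.sqrt (∑ j ∈ R.act v, (⟪R.u j, z⟫)^2) := by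
  classical
  set s := R.act v with hsdef
  set T : E d →ₗ[ℝ] EuclideanSpace ℝ (Fin m) :=
    { toFun := fun z => WithLp.toLp 2 (fun j => if j ∈ s then ⟪R.u j, z⟫ else 0 : Fin m → ℝ),
      map_add' := by
        intro a b; refine PiLp.ext fun j => ?_
        show (if j ∈ s then ⟪R.u j, a + b⟫ else 0)
          = (if j ∈ s then ⟪R.u j, a⟫ else 0) + (if j ∈ s then ⟪R.u j, b⟫ else 0)
        by_cases hj : j ∈ s
        · rw [if_pos hj, if_pos hj, if_pos hj]
          exact inner_add_right _ _ _
        · rw [if_neg hj, if_neg hj, if_neg hj, add_zero]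
      map_smul' := by
        intro c a; refine PiLp.ext fun j => ?_
        show (if j ∈ s then ⟪R.u j, c • a⟫ else 0)
          = c * (if j ∈ s then ⟪R.u j, a⟫ else 0)
        by_cases hj : j ∈ s
        · rw [if_pos hj, if_pos hj]
          exact real_inner_smul_right _ _ _
        · rw [if_neg hj, if_neg hj, mul_zero] } with hTdef
  have hTnorm : ∀ z, ‖T z‖ = Real.sqrt (∑ j ∈ s, (⟪R.u j, z⟫)^2) := by
    intro z
    rw [EuclideanSpace.norm_eq]
    congr 1
    calc ∑ j : Fin m, ‖(if j ∈ s then ⟪R.u j, z⟫ else 0)‖^2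
        = ∑ j : Fin m, (if j ∈ s then (⟪R.u j, z⟫)^2 else 0) := by
          refine Finset.sum_congr rfl fun j _ => ?_
          by_cases hj : j ∈ s <;> simp [hj, Real.norm_eq_abs, sq_abs]
      _ = ∑ j ∈ s, (⟪R.u j, z⟫)^2 := by
          rw [Finset.sum_ite_mem, Finset.univ_inter]
  have hker : ∀ z, T z = 0 → z = 0 := by
    intro z hz
    apply R.span_at_vertex hd hv z
    intro j hj
    have h0 : (if j ∈ s then ⟪R.u j, z⟫ else 0) = 0 := congrArg (fun w : EuclideanSpace ℝ (Fin m) => w j) hz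
    rwa [if_pos hj] at h0
  have hTinj : Function.Injective T := by
    intro a b hab
    have h1 : T (a - b) = 0 := by rw [map_sub, hab, sub_self]
    exact sub_eq_zero.1 (hker _ h1)
  obtain ⟨cst, hcst0, hcst⟩ : ∃ cst : ℝ, 0 ≤ cst ∧ ∀ z : E d, ‖z‖ ≤ cst * ‖T z‖ := by
    set e := LinearEquiv.ofInjective T hTinj with hedef
    set g := LinearMap.toContinuousLinearMap (e.symm.toLinearMap) with hgdef
    refine ⟨‖g‖, norm_nonneg g, fun z => ?_⟩
    have h3 : g (e z) = z := by
      show e.symm.toLinearMap (e z) = z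
      simp
    have h4 : ‖e z‖ = ‖T z‖ := by
      have : (↑(e z) : EuclideanSpace ℝ (Fin m)) = T z := by
        rw [hedef]; exact LinearEquiv.ofInjective_apply T z
      rw [← this]
      rfl
    calc ‖z‖ = ‖g (e z)‖ := by rw [h3]
      _ ≤ ‖g‖ * ‖e z‖ := g.le_opNorm _
      _ = ‖g‖ * ‖T z‖ := by rw [h4]
  have hbdd : BddAbove {c | ∃ x : E d,
      Real.sqrt (∑ j ∈ s, (⟪R.u j, x⟫)^2) ≤ 1 ∧ c = ‖x‖} := by
    refine ⟨cst, ?_⟩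
    rintro c ⟨x, hx1, rfl⟩
    calc ‖x‖ ≤ cst * ‖T x‖ := hcst x
      _ = cst * Real.sqrt (∑ j ∈ s, (⟪R.u j, x⟫)^2) := by rw [hTnorm]
      _ ≤ cst * 1 := mul_le_mul_of_nonneg_left hx1 hcst0
      _ = cst := mul_one cst
  have hkey : ∀ z : E d, ‖z‖ ≤ invNormU R.u s *
      Real.sqrt (∑ j ∈ s, (⟪R.u j, z⟫)^2) := by
    intro z
    have hsumnn : 0 ≤ ∑ j ∈ s, (⟪R.u j, z⟫)^2 := Finset.sum_nonneg fun j _ => sq_nonneg _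
    set r := Real.sqrt (∑ j ∈ s, (⟪R.u j, z⟫)^2) with hrdef
    have hr0 : 0 ≤ r := Real.sqrt_nonneg _
    rcases eq_or_lt_of_le hr0 with hr0' | hrpos
    · have hsum0 : ∑ j ∈ s, (⟪R.u j, z⟫)^2 = 0 :=
        (Real.sqrt_eq_zero hsumnn).1 hr0'.symm
      have hz0 : z = 0 := by
        apply R.span_at_vertex hd hv z
        intro j hj
        have h5 := (Finset.sum_eq_zero_iff_of_nonneg (fun j _ => sq_nonneg _)).1 hsum0 j hj
        exact pow_eq_zero_iff two_ne_zero |>.1 h5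
      have hinv0 : (0:ℝ) ≤ invNormU R.u s := le_csSup hbdd ⟨0, by simp, by simp⟩
      rw [hz0, norm_zero]
      exact mul_nonneg hinv0 hr0
    · set z' := r⁻¹ • z with hz'def
      have hinner' : ∀ j, ⟪R.u j, z'⟫ = r⁻¹ * ⟪R.u j, z⟫ := fun j => real_inner_smul_right _ _ _
      have hsum' : ∑ j ∈ s, (⟪R.u j, z'⟫)^2 = 1 := by
        have : ∀ j ∈ s, (⟪R.u j, z'⟫)^2 = r⁻¹^2 * (⟪R.u j, z⟫)^2 := by
          intro j _; rw [hinner', mul_pow]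
        rw [Finset.sum_congr rfl this, ← Finset.mul_sum]
        rw [← Real.sq_sqrt hsumnn, ← hrdef]
        field_simp
      have hmem : ‖z'‖ ∈ {c | ∃ x : E d,
          Real.sqrt (∑ j ∈ s, (⟪R.u j, x⟫)^2) ≤ 1 ∧ c = ‖x‖} := by
        refine ⟨z', ?_, rfl⟩
        rw [hsum', Real.sqrt_one]
      have hle := le_csSup hbdd hmem
      have hz'n : ‖z'‖ = r⁻¹ * ‖z‖ := by
        rw [hz'def, norm_smul, Real.norm_eq_abs, abs_of_pos (inv_pos.2 hrpos)]
      rw [hz'n] at hle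
      calc ‖z‖ = r * (r⁻¹ * ‖z‖) := by field_simp
        _ ≤ r * invNormU R.u s := mul_le_mul_of_nonneg_left hle hrpos.le
        _ = invNormU R.u s * r := mul_comm _ _
  have hpos : 0 < invNormU R.u s := by
    have hd0 : Nonempty (Fin d) := ⟨⟨0, by omega⟩⟩
    set e0 : E d := EuclideanSpace.single (Classical.arbitrary (Fin d)) (1:ℝ) with he0def
    have he0 : ‖e0‖ = 1 := by
      rw [he0def, EuclideanSpace.norm_single, norm_one]
    have hk := hkey e0
    rw [he0] at hk
    nlinarith [Real.sqrt_nonneg (∑ j ∈ s, (⟪R.u j, e0⟫)^2), hk]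
  exact ⟨hpos, hkey⟩

lemma FacetRep.bddAbove_gamSet (R : FacetRep d m) :
    BddAbove {c | ∃ v ∈ vertices R.P, ∃ j, R.q v j ≠ 0 ∧ c = 1 - R.q v j} := by
  refine ⟨1, ?_⟩
  rintro c ⟨v', hv', j, hj, rfl⟩
  have := R.q_nonneg (extremePoints_subset hv') j
  linarith

lemma FacetRep.q_ge_gam (R : FacetRep d m) {v : E d} (hv : v ∈ vertices R.P)
    {j : Fin m} (hj : j ∉ R.act v) : 1 - R.gam ≤ R.q v j := by
  have hmem : 1 - R.q v j ∈ {c | ∃ v ∈ vertices R.P, ∃ j, R.q v j ≠ 0 ∧ c = 1 - R.q v j} :=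
    ⟨v, hv, j, (R.q_vertex_pos hv hj).ne', rfl⟩
  have := le_csSup R.bddAbove_gamSet hmem
  rw [FacetRep.gam]
  linarith

lemma FacetRep.gam_nonneg (R : FacetRep d m) (hd : 1 ≤ d) : 0 ≤ R.gam := by
  rcases Set.eq_empty_or_nonempty
    {c | ∃ v ∈ vertices R.P, ∃ j, R.q v j ≠ 0 ∧ c = 1 - R.q v j} with he | hne
  · rw [FacetRep.gam, he, Real.sSup_empty]
  · obtain ⟨c, hc⟩ := hne
    obtain ⟨v', hv', j, hj, rfl⟩ := hc
    have h1 := R.q_le_one hd (extremePoints_subset hv') j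
    have h2 := le_csSup R.bddAbove_gamSet ⟨v', hv', j, hj, rfl⟩
    rw [FacetRep.gam]
    linarith

lemma FacetRep.gam_lt_one (R : FacetRep d m) (V : Finset (E d))
    (hV : (↑V : Set (E d)) = vertices R.P) : R.gam < 1 := by
  set Γ := {c | ∃ v ∈ vertices R.P, ∃ j, R.q v j ≠ 0 ∧ c = 1 - R.q v j} with hΓdef
  have hfin : Γ.Finite := by
    apply Set.Finite.subset (Set.Finite.image (fun p : E d × Fin m => 1 - R.q p.1 p.2)
      (Set.Finite.prod V.finite_toSet (Set.finite_univ)))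
    rintro c ⟨v', hv', j, _, rfl⟩
    exact ⟨(v', j), ⟨by rw [hV]; exact hv', Set.mem_univ _⟩, rfl⟩
  rcases Set.eq_empty_or_nonempty Γ with he | hne
  · rw [FacetRep.gam, ← hΓdef, he, Real.sSup_empty]; norm_num
  · have hmem := Set.Nonempty.csSup_mem hne hfin
    obtain ⟨v', hv', j, hj, hgam⟩ := hmem
    have h0 : 0 ≤ R.q v' j := R.q_nonneg (extremePoints_subset hv') j
    have hpos : 0 < R.q v' j := lt_of_le_of_ne h0 (Ne.symm hj)
    rw [FacetRep.gam, ← hΓdef, hgam]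
    linarith

end Geometry

set_option maxHeartbeats 1000000 in
theorem statement15 (d m : ℕ) (hd : 2 ≤ d) (R : FacetRep d m) (hs : R.Simple)
    (V : Finset (E d)) (hV : (↑V : Set (E d)) = vertices R.P)
    (ε₂ : ℝ) (h0 : 0 ≤ ε₂)
    (h1 : ε₂ ≤ ((1 - R.gam) / (4 * (1 + d))) ^ (m - d))
    (h2 : ε₂ ≤ (1 - R.gam) / (2 * (1 + d) * Real.sqrt d * alpha R V))
    (h3 : ε₂ ≤ 5 * (1 - R.gam) ^ (m - d) /
      (18 * (Nat.choose d (d / 2) : ℝ) * 2 ^ (m - d) * (3 ^ (m - d) - 2 ^ (m - d)))) :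
    ∀ v ∈ vertices R.P,
      {x ∈ R.Piv v ε₂ | ∀ i, m - d + 2 ≤ i → i ≤ m → 0 ≤ esymm (R.q x) i}
        ⊆ R.Cv v ∪ R.P := by
  classical
  intro v hv x hx
  obtain ⟨hxPiv, hxsym⟩ := hx
  have hd1 : 1 ≤ d := by omega
  have hA : (R.act v).card = d := hs v hv
  have hdm : d ≤ m := by
    calc d = (R.act v).card := hA.symm
      _ ≤ (Finset.univ : Finset (Fin m)).card := Finset.card_le_card (Finset.subset_univ _)
      _ = m := by rw [Finset.card_univ, Fintype.card_fin]
  have hvP : v ∈ R.P := extremePoints_subset hv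
  have hγ1 : R.gam < 1 := R.gam_lt_one V hV
  have hγ0 : 0 ≤ R.gam := R.gam_nonneg hd1
  obtain ⟨hinv_pos, hinv⟩ := R.invNormU_spec hd1 hv
  -- alpha facts
  have hSAfin : {a | ∃ v' ∈ V, a = invNormU R.u (R.act v')}.Finite := by
    apply Set.Finite.subset (Set.Finite.image (fun v' => invNormU R.u (R.act v'))
      V.finite_toSet)
    rintro a ⟨v', hv', rfl⟩
    exact ⟨v', hv', rfl⟩
  have hbddSA : BddAbove {a | ∃ v' ∈ V, a = invNormU R.u (R.act v')} := hSAfin.bddAbove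
  have hvV : v ∈ V := by
    have : v ∈ (↑V : Set (E d)) := by rw [hV]; exact hv
    exact_mod_cast this
  have hαge : invNormU R.u (R.act v) ≤ alpha R V := le_csSup hbddSA ⟨v, hvV, rfl⟩
  have hα0 : 0 < alpha R V := lt_of_lt_of_le hinv_pos hαge
  have hdpos : (0:ℝ) < (d:ℝ) := by exact_mod_cast (by omega : 0 < d)
  have hsqd : 0 < Real.sqrt d := Real.sqrt_pos.2 hdpos
  have hD : 0 < 2*(1+(d:ℝ))*Real.sqrt d*(alpha R V) := by positivity
  have h2' : ε₂ * (2*(1+(d:ℝ))*Real.sqrt d*(alpha R V)) ≤ 1 - R.gam := by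
    rw [← le_div_iff₀ hD]; exact h2
  have hdiam := R.diam_pos hd1
  -- distance bound
  have hxv : ∀ j ∈ R.act v, ⟪R.u j, x - v⟫ = -(Metric.diam R.P * R.q x j) := by
    intro j hj
    have hq := R.q_sub hd1 v x j
    have h' : ⟪R.u j, x - v⟫ = (R.q v j - R.q x j) * Metric.diam R.P :=
      ((div_eq_iff hdiam.ne').1 hq.symm)
    rw [h', R.q_vertex_zero hj]
    ring
  have hsum : ∑ j ∈ R.act v, (⟪R.u j, x - v⟫)^2 ≤ d * (Metric.diam R.P * ε₂)^2 := by
    calc ∑ j ∈ R.act v, (⟪R.u j, x - v⟫)^2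
        ≤ ∑ _j ∈ R.act v, (Metric.diam R.P * ε₂)^2 := by
          apply Finset.sum_le_sum
          intro j hj
          rw [hxv j hj, neg_sq]
          have habs := abs_le.1 (hxPiv j hj)
          have h1' : -(Metric.diam R.P * ε₂) ≤ Metric.diam R.P * R.q x j := by
            nlinarith [hdiam.le, habs.1]
          have h2'' : Metric.diam R.P * R.q x j ≤ Metric.diam R.P * ε₂ := by
            nlinarith [hdiam.le, habs.2]
          exact sq_le_sq' h1' h2''
      _ = d * (Metric.diam R.P * ε₂)^2 := by
          rw [Finset.sum_const, hA, nsmul_eq_mul]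
  have hdist : ‖x - v‖ ≤ alpha R V * (Real.sqrt d * (Metric.diam R.P * ε₂)) := by
    have hde : (0:ℝ) ≤ Metric.diam R.P * ε₂ := mul_nonneg hdiam.le h0
    calc ‖x - v‖ ≤ invNormU R.u (R.act v) *
          Real.sqrt (∑ j ∈ R.act v, (⟪R.u j, x - v⟫)^2) := hinv (x - v)
      _ ≤ alpha R V * (Real.sqrt d * (Metric.diam R.P * ε₂)) := by
          apply mul_le_mul hαge ?_ (Real.sqrt_nonneg _) hα0.le
          calc Real.sqrt (∑ j ∈ R.act v, (⟪R.u j, x - v⟫)^2)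
              ≤ Real.sqrt ((d:ℝ) * (Metric.diam R.P * ε₂)^2) := Real.sqrt_le_sqrt hsum
            _ = Real.sqrt d * (Metric.diam R.P * ε₂) := by
                rw [Real.sqrt_mul hdpos.le, Real.sqrt_sq hde]
  -- lower bound for inactive coordinates
  have hb_lower : ∀ j ∈ Finset.univ \ R.act v, (1 - R.gam)/2 ≤ R.q x j := by
    intro j hjmem
    have hj : j ∉ R.act v := (Finset.mem_sdiff.1 hjmem).2
    have hqv : 1 - R.gam ≤ R.q v j := R.q_ge_gam hv hj
    have hlip : R.q v j - R.q x j ≤ ‖x - v‖ / Metric.diam R.P := R.q_lip hd1 v x j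
    have hnd : ‖x - v‖ / Metric.diam R.P ≤ alpha R V * Real.sqrt d * ε₂ := by
      rw [div_le_iff₀ hdiam]
      calc ‖x - v‖ ≤ alpha R V * (Real.sqrt d * (Metric.diam R.P * ε₂)) := hdist
        _ = alpha R V * Real.sqrt d * ε₂ * Metric.diam R.P := by ring
    have hfr : alpha R V * Real.sqrt d * ε₂ ≤ (1 - R.gam)/(2*(1+(d:ℝ))) := by
      rw [le_div_iff₀ (by positivity : (0:ℝ) < 2*(1+(d:ℝ)))]
      calc alpha R V * Real.sqrt d * ε₂ * (2*(1+(d:ℝ)))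
          = ε₂ * (2*(1+(d:ℝ))*Real.sqrt d*(alpha R V)) := by ring
        _ ≤ 1 - R.gam := h2'
    have hhalf : (1 - R.gam)/(2*(1+(d:ℝ))) ≤ (1 - R.gam)/2 := by
      apply div_le_div_of_nonneg_left (by linarith) (by norm_num)
      nlinarith [hdpos]
    linarith
  -- apply the core lemma
  have hsym' : ∀ i, m - d + 2 ≤ i → i ≤ m → 0 ≤ esymmOn Finset.univ (R.q x) i :=
    fun i hi1 hi2 => hxsym i hi1 hi2
  have hcore := core hd hdm (R.act v) hA (R.q x) ε₂ R.gam h0 hγ1 hγ0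
    (fun j hj => hxPiv j hj) hb_lower hsym' h1 h3
  rcases hcore with hc | hc
  · right
    rw [R.rep]
    exact fun j => hc j
  · left
    exact hc

end AverkovHenk
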